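/- More good geometry: (a) If Q, Q' are CZ cubes with (1.3)Q ∩ (1.3)Q' ≠ ∅, then their closures intersect (Q ↔ Q'); consequently each point of ℝ^n belongs to at most C(n) of the cubes 1.3Q with Q CZ. (b) If a CZ cube Q satisfies Cl(Q) ∩ ∂Q° ≠ ∅, then δ_Q ≥ (1/20)·δ_{Q°}. -/

import Mathlib

open MeasureTheory

noncomputable section

/-- A dyadic cube `∏_i (j_i 2^k, (j_i+1) 2^k]` in `ℝ^n`, recorded by its scale `k` and
its integer coordinates `j`. -/
structure DyadicCube (n : ℕ) where
  k : ℤ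
  j : Fin n → ℤ

namespace DyadicCube

/-- The sidelength `2^k` of a dyadic cube. -/
def sidelength {n : ℕ} (Q : DyadicCube n) : ℝ := 2 ^ Q.k

/-- The underlying (half-open) set of a dyadic cube. -/
def toSet {n : ℕ} (Q : DyadicCube n) : Set (Fin n → ℝ) :=
  {x | ∀ i, (Q.j i : ℝ) * 2 ^ Q.k < x i ∧ x i ≤ ((Q.j i : ℝ) + 1) * 2 ^ Q.k}

/-- The center of a dyadic cube. -/
def center {n : ℕ} (Q : DyadicCube n) : Fin n → ℝ :=
  fun i => ((Q.j i : ℝ) + 1 / 2) * 2 ^ Q.k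

/-- The concentric dilate `cQ` of a dyadic cube `Q` (as a closed cube). -/
def dilate {n : ℕ} (Q : DyadicCube n) (c : ℝ) : Set (Fin n → ℝ) :=
  {x | ∀ i, |x i - Q.center i| ≤ c * Q.sidelength / 2}

end DyadicCube

/-- The unit cube `Q° = (0,1]^n` as a dyadic cube. -/
def unitCube (n : ℕ) : DyadicCube n := ⟨0, fun _ => 0⟩

/-- Monotonicity of the `OK` predicate: if `Q, Q'` are dyadic subcubes of `Q°`, `Q'` is OK and
`3Q ⊆ 3Q'`, then `Q` is OK. -/
def OKmono {n : ℕ} (OK : DyadicCube n → Prop) : Prop :=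
  ∀ Q Q' : DyadicCube n, Q.toSet ⊆ (unitCube n).toSet → Q'.toSet ⊆ (unitCube n).toSet →
    OK Q' → Q.dilate 3 ⊆ Q'.dilate 3 → OK Q

/-- A Calderón–Zygmund cube: an OK dyadic subcube of `Q°` such that every dyadic subcube of
`Q°` properly containing it is not OK. -/
def CZ {n : ℕ} (OK : DyadicCube n → Prop) (Q : DyadicCube n) : Prop :=
  Q.toSet ⊆ (unitCube n).toSet ∧ OK Q ∧
    ∀ Q' : DyadicCube n, Q'.toSet ⊆ (unitCube n).toSet → Q.toSet ⊂ Q'.toSet → ¬ OK Q'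

/-- A keystone cube: a CZ cube `Q` such that every CZ cube meeting `100Q` has sidelength
at least that of `Q`. -/
def Keystone {n : ℕ} (OK : DyadicCube n → Prop) (Q : DyadicCube n) : Prop :=
  CZ OK Q ∧ ∀ Q' : DyadicCube n, CZ OK Q' → (Q'.toSet ∩ Q.dilate 100).Nonempty →
    Q.sidelength ≤ Q'.sidelength

/-- The union of all CZ cubes. -/
def KCZ {n : ℕ} (OK : DyadicCube n → Prop) : Set (Fin n → ℝ) :=
  ⋃ (Q : DyadicCube n) (_ : CZ OK Q), Q.toSet

/-- The set of keystone points `K_p = Q° \ ⋃ {Q : Q CZ}`. -/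
def Kp {n : ℕ} (OK : DyadicCube n → Prop) : Set (Fin n → ℝ) :=
  (unitCube n).toSet \ KCZ OK

namespace DyadicCube

variable {n : ℕ}

lemma slen_pos (Q : DyadicCube n) : 0 < Q.sidelength := by
  unfold sidelength; positivity

lemma toSet_eq_pi (Q : DyadicCube n) :
    Q.toSet = Set.pi Set.univ
      (fun i => Set.Ioc ((Q.j i : ℝ) * 2 ^ Q.k) (((Q.j i : ℝ) + 1) * 2 ^ Q.k)) := by
  ext x; simp [toSet, Set.mem_pi, Set.mem_Ioc]

lemma mem_closure_toSet {Q : DyadicCube n} {y : Fin n → ℝ} :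
    y ∈ closure Q.toSet ↔
      ∀ i, (Q.j i : ℝ) * Q.sidelength ≤ y i ∧ y i ≤ ((Q.j i : ℝ) + 1) * Q.sidelength := by
  have hs : (0:ℝ) < 2 ^ Q.k := by positivity
  rw [toSet_eq_pi, closure_pi_set]
  simp only [Set.mem_pi, Set.mem_univ, forall_true_left]
  refine forall_congr' fun i => ?_
  rw [closure_Ioc (by nlinarith : (Q.j i : ℝ) * 2 ^ Q.k ≠ ((Q.j i : ℝ) + 1) * 2 ^ Q.k)]
  simp [Set.mem_Icc, sidelength]

lemma abs_sub_center_of_mem_closure {Q : DyadicCube n} {y : Fin n → ℝ}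
    (hy : y ∈ closure Q.toSet) (i : Fin n) : |y i - Q.center i| ≤ Q.sidelength / 2 := by
  have h := mem_closure_toSet.1 hy i
  have hc : Q.center i = (Q.j i : ℝ) * Q.sidelength + Q.sidelength / 2 := by
    unfold center sidelength; ring
  rw [abs_le, hc]
  constructor <;> nlinarith [h.1, h.2]

lemma mem_unit_iff (x : Fin n → ℝ) : x ∈ (unitCube n).toSet ↔ ∀ i, 0 < x i ∧ x i ≤ 1 := by
  unfold unitCube toSet
  norm_num

lemma subset_unit_iff (Q : DyadicCube n) :
    Q.toSet ⊆ (unitCube n).toSet ↔ ∀ i, 0 ≤ Q.j i ∧ ((Q.j i : ℝ) + 1) * 2 ^ Q.k ≤ 1 := by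
  have hs : (0:ℝ) < 2 ^ Q.k := by positivity
  constructor
  · intro h i
    set p : Fin n → ℝ := fun i' => ((Q.j i' : ℝ) + 1) * 2 ^ Q.k with hp
    have hpmem : p ∈ Q.toSet := by
      intro i'
      have hpe : p i' = ((Q.j i' : ℝ) + 1) * 2 ^ Q.k := rfl
      rw [hpe]
      constructor
      · nlinarith
      · exact le_refl _
    set q := Function.update p i ((Q.j i : ℝ) * 2 ^ Q.k + 2 ^ Q.k / 2) with hq
    have hqmem : q ∈ Q.toSet := by
      intro i'
      rcases eq_or_ne i' i with hii | hii
      · rw [hii, hq, Function.update_self]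
        constructor <;> nlinarith
      · rw [hq, Function.update_of_ne hii]
        exact hpmem i'
    have h1 := (mem_unit_iff _).1 (h hpmem) i
    have h2 := (mem_unit_iff _).1 (h hqmem) i
    rw [hq, Function.update_self] at h2
    have hpe : p i = ((Q.j i : ℝ) + 1) * 2 ^ Q.k := rfl
    rw [hpe] at h1
    refine ⟨?_, h1.2⟩
    by_contra hneg
    push_neg at hneg
    have h' : Q.j i ≤ -1 := by omega
    have hj1 : ((Q.j i : ℤ) : ℝ) ≤ ((-1 : ℤ) : ℝ) := Int.cast_le.2 h'
    push_cast at hj1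
    nlinarith [h2.1]
  · intro h x hx
    rw [mem_unit_iff]
    intro i
    have h1 := (h i).1
    have h2 := (h i).2
    have h3 := hx i
    have hj0 : (0:ℝ) ≤ (Q.j i : ℝ) := by exact_mod_cast h1
    constructor
    · nlinarith [h3.1]
    · linarith [h3.2]

lemma k_nonpos {Q : DyadicCube n} (hn : 1 ≤ n) (h : Q.toSet ⊆ (unitCube n).toSet) :
    Q.k ≤ 0 := by
  obtain ⟨h0, h1⟩ := (subset_unit_iff Q).1 h ⟨0, hn⟩
  have hj : (0:ℝ) ≤ (Q.j ⟨0, hn⟩ : ℝ) := by exact_mod_cast h0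
  have hs : (0:ℝ) < 2 ^ Q.k := by positivity
  have hle : (2:ℝ) ^ Q.k ≤ 1 := by nlinarith
  by_contra hk
  push_neg at hk
  have : (2:ℝ) ^ (0:ℤ) < 2 ^ Q.k := zpow_lt_zpow_right₀ one_lt_two hk
  rw [zpow_zero] at this
  linarith

def parent (Q : DyadicCube n) : DyadicCube n := ⟨Q.k + 1, fun i => Q.j i / 2⟩

lemma parent_slen (Q : DyadicCube n) : (parent Q).sidelength = 2 * Q.sidelength := by
  show (2:ℝ) ^ (Q.k + 1) = 2 * 2 ^ Q.k
  rw [zpow_add_one₀ two_ne_zero]; ring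

lemma subset_parent (Q : DyadicCube n) : Q.toSet ⊆ (parent Q).toSet := by
  intro x hx i
  have hs : (0:ℝ) < 2 ^ Q.k := by positivity
  have hdiv : 2 * (Q.j i / 2) ≤ Q.j i ∧ Q.j i ≤ 2 * (Q.j i / 2) + 1 := by omega
  have c1 : (2 * ((Q.j i / 2 : ℤ) : ℝ)) ≤ (Q.j i : ℝ) := by exact_mod_cast hdiv.1
  have c2 : (Q.j i : ℝ) ≤ 2 * ((Q.j i / 2 : ℤ) : ℝ) + 1 := by exact_mod_cast hdiv.2
  have h2 : (2:ℝ) ^ (Q.k + 1) = 2 * 2 ^ Q.k := by rw [zpow_add_one₀ two_ne_zero]; ring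
  have hx' := hx i
  constructor
  · show ((Q.j i / 2 : ℤ) : ℝ) * 2 ^ (Q.k + 1) < x i
    rw [h2]; nlinarith [hx'.1]
  · show x i ≤ (((Q.j i / 2 : ℤ) : ℝ) + 1) * 2 ^ (Q.k + 1)
    rw [h2]; nlinarith [hx'.2]

lemma ssubset_parent (hn : 1 ≤ n) (Q : DyadicCube n) : Q.toSet ⊂ (parent Q).toSet := by
  rw [ssubset_iff_subset_not_subset]
  refine ⟨subset_parent Q, fun hsub => ?_⟩
  have hs : (0:ℝ) < 2 ^ Q.k := by positivity
  have h2 : (2:ℝ) ^ (Q.k + 1) = 2 * 2 ^ Q.k := by rw [zpow_add_one₀ two_ne_zero]; ring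
  obtain ⟨t, htp, htq⟩ : ∃ t : ℝ,
      (((Q.j ⟨0,hn⟩ / 2 : ℤ) : ℝ) * 2 ^ (Q.k+1) < t ∧
        t ≤ (((Q.j ⟨0,hn⟩ / 2 : ℤ) : ℝ) + 1) * 2 ^ (Q.k+1)) ∧
      ¬((Q.j ⟨0,hn⟩ : ℝ) * 2 ^ Q.k < t ∧ t ≤ ((Q.j ⟨0,hn⟩ : ℝ) + 1) * 2 ^ Q.k) := by
    by_cases hr : Q.j ⟨0,hn⟩ % 2 = 0
    · refine ⟨(2 * ((Q.j ⟨0,hn⟩ / 2 : ℤ) : ℝ) + 2) * 2 ^ Q.k, ?_, ?_⟩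
      · have heq : (Q.j ⟨0,hn⟩ : ℝ) = 2 * ((Q.j ⟨0,hn⟩ / 2 : ℤ) : ℝ) := by
          exact_mod_cast (by omega : Q.j ⟨0,hn⟩ = 2 * (Q.j ⟨0,hn⟩ / 2))
        rw [h2]; constructor <;> nlinarith
      · intro hc
        have heq : (Q.j ⟨0,hn⟩ : ℝ) = 2 * ((Q.j ⟨0,hn⟩ / 2 : ℤ) : ℝ) := by
          exact_mod_cast (by omega : Q.j ⟨0,hn⟩ = 2 * (Q.j ⟨0,hn⟩ / 2))
        nlinarith [hc.2]
    · refine ⟨2 * ((Q.j ⟨0,hn⟩ / 2 : ℤ) : ℝ) * 2 ^ Q.k + 2 ^ Q.k / 2, ?_, ?_⟩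
      · have heq : (Q.j ⟨0,hn⟩ : ℝ) = 2 * ((Q.j ⟨0,hn⟩ / 2 : ℤ) : ℝ) + 1 := by
          exact_mod_cast (by omega : Q.j ⟨0,hn⟩ = 2 * (Q.j ⟨0,hn⟩ / 2) + 1)
        rw [h2]; constructor <;> nlinarith
      · intro hc
        have heq : (Q.j ⟨0,hn⟩ : ℝ) = 2 * ((Q.j ⟨0,hn⟩ / 2 : ℤ) : ℝ) + 1 := by
          exact_mod_cast (by omega : Q.j ⟨0,hn⟩ = 2 * (Q.j ⟨0,hn⟩ / 2) + 1)
        nlinarith [hc.1]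
  set p := Function.update (fun i => ((Q.j i : ℝ) + 1) * 2 ^ Q.k) ⟨0,hn⟩ t with hp
  have hpmem : p ∈ (parent Q).toSet := by
    intro i
    show ((Q.j i / 2 : ℤ) : ℝ) * 2 ^ (Q.k + 1) < p i ∧
      p i ≤ (((Q.j i / 2 : ℤ) : ℝ) + 1) * 2 ^ (Q.k + 1)
    rcases eq_or_ne i ⟨0,hn⟩ with hii | hii
    · rw [hii, hp, Function.update_self]
      exact htp
    · rw [hp, Function.update_of_ne hii]
      have hdiv : 2 * (Q.j i / 2) ≤ Q.j i ∧ Q.j i ≤ 2 * (Q.j i / 2) + 1 := by omega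
      have c1 : (2 * ((Q.j i / 2 : ℤ) : ℝ)) ≤ (Q.j i : ℝ) := by exact_mod_cast hdiv.1
      have c2 : (Q.j i : ℝ) ≤ 2 * ((Q.j i / 2 : ℤ) : ℝ) + 1 := by exact_mod_cast hdiv.2
      rw [h2]
      constructor <;> nlinarith
  have hmem : p ∈ Q.toSet := hsub hpmem
  have h := hmem ⟨0,hn⟩
  rw [hp, Function.update_self] at h
  exact htq h

lemma parent_subset_unit {Q : DyadicCube n} (hsub : Q.toSet ⊆ (unitCube n).toSet)
    (hk : Q.k ≤ -1) : (parent Q).toSet ⊆ (unitCube n).toSet := by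
  rw [subset_unit_iff] at hsub ⊢
  intro i
  obtain ⟨h0, h1⟩ := hsub i
  refine ⟨by show (0:ℤ) ≤ Q.j i / 2; omega, ?_⟩
  obtain ⟨m, hm⟩ : ∃ m : ℕ, Q.k = -((m : ℤ) + 1) := ⟨(-Q.k - 1).toNat, by omega⟩
  have h2m : (0:ℝ) < (2:ℝ) ^ (m + 1) := by positivity
  have hpow : (2:ℝ) ^ Q.k = ((2:ℝ) ^ (m + 1))⁻¹ := by
    rw [hm, ← zpow_natCast (2:ℝ) (m+1), ← zpow_neg]
    norm_num
  have hj : Q.j i + 1 ≤ 2 ^ (m + 1) := by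
    have h1' : ((Q.j i : ℝ) + 1) * ((2:ℝ) ^ (m + 1))⁻¹ ≤ 1 := by rw [← hpow]; exact h1
    have : ((Q.j i : ℝ) + 1) ≤ 2 ^ (m + 1) := by
      rw [mul_inv_le_iff₀ h2m] at h1'
      linarith
    exact_mod_cast this
  have hj' : Q.j i / 2 + 1 ≤ 2 ^ m := by
    have hB : (1:ℤ) ≤ 2 ^ m := by have := pow_pos (show (0:ℤ) < 2 by norm_num) m; omega
    have h2m' : (2:ℤ) ^ (m + 1) = 2 * 2 ^ m := by ring
    omega
  have hj'R : ((Q.j i / 2 : ℤ) : ℝ) + 1 ≤ (2:ℝ) ^ m := by exact_mod_cast hj'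
  show (((Q.j i / 2 : ℤ) : ℝ) + 1) * 2 ^ ((parent Q).k) ≤ 1
  have hkp : (parent Q).k = -(m : ℤ) := by show Q.k + 1 = -(m:ℤ); omega
  have hpow' : (2:ℝ) ^ (parent Q).k = ((2:ℝ) ^ m)⁻¹ := by
    rw [hkp, ← zpow_natCast (2:ℝ) m, ← zpow_neg]
  rw [hpow']
  have hm0 : (0:ℝ) < (2:ℝ) ^ m := by positivity
  rw [mul_inv_le_iff₀ hm0]
  linarith

lemma abs_center_parent (Q : DyadicCube n) (i : Fin n) :
    |(parent Q).center i - Q.center i| ≤ Q.sidelength / 2 := by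
  have hs : (0:ℝ) < 2 ^ Q.k := by positivity
  have hdiv : 2 * (Q.j i / 2) ≤ Q.j i ∧ Q.j i ≤ 2 * (Q.j i / 2) + 1 := by omega
  have c1 : (2 * ((Q.j i / 2 : ℤ) : ℝ)) ≤ (Q.j i : ℝ) := by exact_mod_cast hdiv.1
  have c2 : (Q.j i : ℝ) ≤ 2 * ((Q.j i / 2 : ℤ) : ℝ) + 1 := by exact_mod_cast hdiv.2
  have h2 : (2:ℝ) ^ (Q.k + 1) = 2 * 2 ^ Q.k := by rw [zpow_add_one₀ two_ne_zero]; ring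
  have hc : (parent Q).center i = (((Q.j i / 2 : ℤ) : ℝ) + 1/2) * 2 ^ (Q.k + 1) := rfl
  have hc2 : Q.center i = ((Q.j i : ℝ) + 1/2) * 2 ^ Q.k := rfl
  have hsl : Q.sidelength = 2 ^ Q.k := rfl
  rw [hc, hc2, hsl, h2, abs_le]
  constructor <;> nlinarith

end DyadicCube
namespace DyadicCube

variable {n : ℕ}

lemma dilate_subset {Q Q' : DyadicCube n} {c : ℝ}
    (h : ∀ i, |Q.center i - Q'.center i| + c * Q.sidelength / 2 ≤ c * Q'.sidelength / 2) :
    Q.dilate c ⊆ Q'.dilate c := by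
  intro x hx i
  have h1 := hx i
  have h2 := h i
  have h3 := abs_sub_le (x i) (Q.center i) (Q'.center i)
  linarith

lemma not_small {OK : DyadicCube n → Prop} (hmono : OKmono OK) (hn : 1 ≤ n)
    {Q Q' : DyadicCube n} (hQ : CZ OK Q) (hQ' : CZ OK Q')
    (hk : Q'.k ≤ -1)
    (hD : ∀ i, |Q'.center i - Q.center i| + Q'.sidelength / 2 + 3 * Q'.sidelength
      ≤ 3 * Q.sidelength / 2) :
    False := by
  have hpu := parent_subset_unit hQ'.1 hk
  have hdil : (parent Q').dilate 3 ⊆ Q.dilate 3 := by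
    apply dilate_subset
    intro i
    have h1 := abs_center_parent Q' i
    have h2 := hD i
    have h3 := abs_sub_le ((parent Q').center i) (Q'.center i) (Q.center i)
    rw [parent_slen]
    linarith
  have hOKp : OK (parent Q') := hmono _ _ hpu hQ.1 hQ.2.1 hdil
  exact hQ'.2.2 (parent Q') hpu (ssubset_parent hn Q') hOKp

lemma slen_le_of_k_le {Q Q' : DyadicCube n} (h : Q.k ≤ Q'.k) :
    Q.sidelength ≤ Q'.sidelength :=
  zpow_le_zpow_right₀ one_le_two h

lemma closure_meet_scale {OK : DyadicCube n → Prop} (hmono : OKmono OK) (hn : 1 ≤ n)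
    {Q Q' : DyadicCube n} (hQ : CZ OK Q) (hQ' : CZ OK Q')
    (hmeet : (closure Q.toSet ∩ closure Q'.toSet).Nonempty) : Q.k - 2 < Q'.k := by
  by_contra hc
  push_neg at hc
  obtain ⟨y, hy, hy'⟩ := hmeet
  have hk0 : Q.k ≤ 0 := k_nonpos hn hQ.1
  have hss : Q'.sidelength ≤ Q.sidelength / 4 := by
    have h1 : Q'.sidelength ≤ (2:ℝ) ^ (Q.k - 2) := slen_le_of_k_le (Q' := ⟨Q.k - 2, Q.j⟩) hc
    have h2 : (2:ℝ) ^ (Q.k - 2) = Q.sidelength / 4 := by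
      show (2:ℝ) ^ (Q.k - 2) = (2:ℝ) ^ Q.k / 4
      rw [zpow_sub₀ two_ne_zero]
      norm_num
    linarith [h1, h2.le]
  apply not_small hmono hn hQ hQ' (by omega)
  intro i
  have h1 := abs_sub_center_of_mem_closure hy i
  have h2 := abs_sub_center_of_mem_closure hy' i
  have h3 := abs_sub_le (Q'.center i) (y i) (Q.center i)
  rw [abs_sub_comm (Q'.center i) (y i)] at h3
  linarith

lemma int_helper (e a : ℤ) (h1 : 1 ≤ e) (h4 : e ≤ 4)
    (h : |(a:ℝ) + ((e:ℝ) - 1)/2| ≤ (13/20) * ((e:ℝ) + 1)) : -e ≤ a ∧ a ≤ 1 := by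
  rw [abs_le] at h
  have he4 : (e:ℝ) ≤ 4 := by exact_mod_cast h4
  have he1 : (1:ℝ) ≤ (e:ℝ) := by exact_mod_cast h1
  constructor
  · have hr : (-(e:ℝ)) - 1 < (a:ℝ) := by linarith [h.1]
    have hz : -e - 1 < a := by exact_mod_cast hr
    omega
  · have hr : (a:ℝ) < 2 := by linarith [h.2]
    have hz : a < (2:ℤ) := by exact_mod_cast hr
    omega

lemma partA_aux {OK : DyadicCube n → Prop} (hmono : OKmono OK) (hn : 1 ≤ n)
    {Q Q' : DyadicCube n} (hQ : CZ OK Q) (hQ' : CZ OK Q') (hkk : Q'.k ≤ Q.k)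
    (hmeet : (Q.dilate (13/10) ∩ Q'.dilate (13/10)).Nonempty) :
    (closure Q.toSet ∩ closure Q'.toSet).Nonempty := by
  obtain ⟨y, hy, hy'⟩ := hmeet
  have hk0 : Q.k ≤ 0 := k_nonpos hn hQ.1
  have hs : (0:ℝ) < Q.sidelength := slen_pos Q
  have hs' : (0:ℝ) < Q'.sidelength := slen_pos Q'
  by_cases hfar : Q'.k ≤ Q.k - 3
  · exfalso
    have hss : Q'.sidelength ≤ Q.sidelength / 8 := by
      have h1 : Q'.sidelength ≤ (2:ℝ) ^ (Q.k - 3) := slen_le_of_k_le (Q' := ⟨Q.k - 3, Q.j⟩) hfar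
      have h2 : (2:ℝ) ^ (Q.k - 3) = Q.sidelength / 8 := by
        show (2:ℝ) ^ (Q.k - 3) = (2:ℝ) ^ Q.k / 8
        rw [zpow_sub₀ two_ne_zero]
        norm_num
      linarith [h1, h2.le]
    apply not_small hmono hn hQ hQ' (by omega)
    intro i
    have h1 := hy i
    have h2 := hy' i
    have h3 := abs_sub_le (Q'.center i) (y i) (Q.center i)
    rw [abs_sub_comm (Q'.center i) (y i)] at h3
    linarith
  · push_neg at hfar
    set d := (Q.k - Q'.k).toNat with hd
    have hd2 : d ≤ 2 := by omega
    have hdk : Q.k = Q'.k + (d : ℤ) := by omega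
    set e : ℤ := 2 ^ d with he
    have he1 : (1:ℤ) ≤ e := by
      rw [he]; have := pow_pos (show (0:ℤ) < 2 by norm_num) d; omega
    have he4 : e ≤ 4 := by
      rw [he]
      calc (2:ℤ) ^ d ≤ 2 ^ 2 := pow_le_pow_right₀ (by norm_num) hd2
      _ = 4 := by norm_num
    have heR : ((e:ℤ) : ℝ) = (2:ℝ) ^ (d : ℤ) := by
      rw [he]; push_cast; rw [zpow_natCast]
    have hse : Q.sidelength = (e:ℝ) * Q'.sidelength := by
      show (2:ℝ) ^ Q.k = (e:ℝ) * (2:ℝ) ^ Q'.k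
      rw [hdk, heR, zpow_add₀ two_ne_zero]
      ring
    have key : ∀ i, (Q'.j i : ℝ) * Q'.sidelength ≤ ((Q.j i : ℝ) + 1) * Q.sidelength ∧
        (Q.j i : ℝ) * Q.sidelength ≤ ((Q'.j i : ℝ) + 1) * Q'.sidelength := by
      intro i
      set a : ℤ := e * Q.j i - Q'.j i with ha
      have hcc : Q.center i - Q'.center i = ((a:ℝ) + ((e:ℝ) - 1)/2) * Q'.sidelength := by
        have hc1 : Q.center i = ((Q.j i : ℝ) + 1/2) * Q.sidelength := rfl
        have hc2 : Q'.center i = ((Q'.j i : ℝ) + 1/2) * Q'.sidelength := rfl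
        rw [hc1, hc2, hse, ha]
        push_cast
        ring
      have htri : |Q.center i - Q'.center i| ≤
          (13/10) * Q.sidelength / 2 + (13/10) * Q'.sidelength / 2 := by
        have t := abs_sub_le (Q.center i) (y i) (Q'.center i)
        rw [abs_sub_comm (Q.center i) (y i)] at t
        linarith [hy i, hy' i]
      rw [hcc, abs_mul, abs_of_pos hs', hse] at htri
      have habs : |(a:ℝ) + ((e:ℝ) - 1)/2| ≤ (13/20) * ((e:ℝ) + 1) := by
        have := (mul_le_mul_iff_of_pos_right hs').mp (by nlinarith [htri] :
          |(a:ℝ) + ((e:ℝ) - 1)/2| * Q'.sidelength ≤ ((13/20) * ((e:ℝ) + 1)) * Q'.sidelength)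
        exact this
      obtain ⟨hl, hr⟩ := int_helper e a he1 he4 habs
      have heR1 : (1:ℝ) ≤ (e:ℝ) := by exact_mod_cast he1
      rw [ha] at hl hr
      constructor
      · have hz : Q'.j i ≤ e * (Q.j i + 1) := by
          have hexp : e * (Q.j i + 1) = e * Q.j i + e := by ring
          linarith [hl]
        have hzR : (Q'.j i : ℝ) ≤ (e:ℝ) * ((Q.j i : ℝ) + 1) := by exact_mod_cast hz
        rw [hse]
        nlinarith
      · have hz : e * Q.j i ≤ Q'.j i + 1 := by linarith [hr]
        have hzR : (e:ℝ) * (Q.j i : ℝ) ≤ (Q'.j i : ℝ) + 1 := by exact_mod_cast hz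
        rw [hse]
        nlinarith
    refine ⟨fun i => max ((Q.j i : ℝ) * Q.sidelength) ((Q'.j i : ℝ) * Q'.sidelength), ?_, ?_⟩
    · rw [mem_closure_toSet]
      intro i
      refine ⟨le_max_left _ _, max_le (by nlinarith) (key i).1⟩
    · rw [mem_closure_toSet]
      intro i
      refine ⟨le_max_right _ _, max_le (key i).2 (by nlinarith)⟩

end DyadicCube
/-- **More good geometry of CZ cubes.**  Suppose `OK` is monotone, `supp μ ⊆ (1/10)Q°`, and
every dyadic subcube `Q` of `Q°` with `μ(3Q) = 0` is OK.  Then: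
(a) if `Q, Q'` are CZ cubes with `1.3Q ∩ 1.3Q' ≠ ∅` then their closures intersect;
consequently each point of `ℝ^n` lies in at most `C(n)` of the cubes `1.3Q`, `Q` CZ;
(b) if a CZ cube `Q` satisfies `Cl(Q) ∩ ∂Q° ≠ ∅`, then `δ_Q ≥ (1/20) δ_{Q°}`. -/
theorem stmt11 (n : ℕ) (hn : 1 ≤ n) :
    ∃ C : ℕ, ∀ OK : DyadicCube n → Prop, OKmono OK →
      ∀ μ : Measure (Fin n → ℝ),
        μ (((unitCube n).dilate (1 / 10))ᶜ) = 0 →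
        (∀ Q : DyadicCube n, Q.toSet ⊆ (unitCube n).toSet → μ (Q.dilate 3) = 0 → OK Q) →
        (∀ Q Q' : DyadicCube n, CZ OK Q → CZ OK Q' →
            (Q.dilate (13 / 10) ∩ Q'.dilate (13 / 10)).Nonempty →
            (closure Q.toSet ∩ closure Q'.toSet).Nonempty) ∧
        (∀ x : Fin n → ℝ,
            {Q : DyadicCube n | CZ OK Q ∧ x ∈ Q.dilate (13 / 10)}.Finite ∧
            {Q : DyadicCube n | CZ OK Q ∧ x ∈ Q.dilate (13 / 10)}.ncard ≤ C) ∧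
        (∀ Q : DyadicCube n, CZ OK Q →
            (closure Q.toSet ∩ frontier (unitCube n).toSet).Nonempty →
            (1 / 20) * (unitCube n).sidelength ≤ Q.sidelength) := by
  refine ⟨3 * 2 ^ n, ?_⟩
  intro OK hmono μ hμ hμOK
  have partA : ∀ Q Q' : DyadicCube n, CZ OK Q → CZ OK Q' →
      (Q.dilate (13 / 10) ∩ Q'.dilate (13 / 10)).Nonempty →
      (closure Q.toSet ∩ closure Q'.toSet).Nonempty := by
    intro Q Q' hQ hQ' hmeet
    rcases le_total Q'.k Q.k with h | h
    · exact DyadicCube.partA_aux hmono hn hQ hQ' h hmeet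
    · rw [Set.inter_comm]
      exact DyadicCube.partA_aux hmono hn hQ' hQ h (by rwa [Set.inter_comm] at hmeet)
  refine ⟨partA, ?_, ?_⟩
  · -- counting
    intro x
    classical
    set S := {Q : DyadicCube n | CZ OK Q ∧ x ∈ Q.dilate (13 / 10)} with hS
    rcases Set.eq_empty_or_nonempty S with he | hne
    · rw [he]
      refine ⟨Set.finite_empty, by simp⟩
    · obtain ⟨Q₀, hQ₀⟩ := hne
      have hk : ∀ Q ∈ S, Q.k ∈ Finset.Icc (Q₀.k - 1) (Q₀.k + 1) := by
        intro Q hQm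
        have hcl := partA Q Q₀ hQm.1 hQ₀.1 ⟨x, hQm.2, hQ₀.2⟩
        have h1 := DyadicCube.closure_meet_scale hmono hn hQm.1 hQ₀.1 hcl
        have h2 := DyadicCube.closure_meet_scale hmono hn hQ₀.1 hQm.1
          (by rwa [Set.inter_comm] at hcl)
        rw [Finset.mem_Icc]
        omega
      set b : ℤ → Fin n → ℤ := fun k i => ⌊x i / 2 ^ k + 3/20⌋ with hb
      have hj : ∀ Q ∈ S, ∀ i, Q.j i ∈ Finset.Icc (b Q.k i - 1) (b Q.k i) := by
        intro Q hQm i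
        have h := hQm.2 i
        have hs : (0:ℝ) < Q.sidelength := Q.slen_pos
        have hcen : Q.center i = ((Q.j i : ℝ) + 1/2) * Q.sidelength := rfl
        rw [hcen, abs_le] at h
        have hsk : Q.sidelength = 2 ^ Q.k := rfl
        rw [Finset.mem_Icc]
        have hub : Q.j i ≤ b Q.k i := by
          show Q.j i ≤ ⌊x i / 2 ^ Q.k + 3/20⌋
          apply Int.le_floor.2
          rw [← hsk]
          have hgoal : (Q.j i : ℝ) - 3/20 ≤ x i / Q.sidelength := by
            rw [le_div_iff₀ hs]
            nlinarith [h.1]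
          linarith
        have hlb : b Q.k i < Q.j i + 2 := by
          show ⌊x i / 2 ^ Q.k + 3/20⌋ < Q.j i + 2
          apply Int.floor_lt.2
          rw [← hsk]
          push_cast
          have hgoal : x i / Q.sidelength < (Q.j i : ℝ) + 2 - 3/20 := by
            rw [div_lt_iff₀ hs]
            nlinarith [h.2]
          linarith
        omega
      set f : ℤ × (Fin n → ℤ) → DyadicCube n := fun p => ⟨p.1, p.2⟩ with hf
      set T : Finset (ℤ × (Fin n → ℤ)) := (Finset.Icc (Q₀.k - 1) (Q₀.k + 1)).biUnion
        (fun k => {k} ×ˢ Fintype.piFinset (fun i => Finset.Icc (b k i - 1) (b k i))) with hT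
      have hsub : S ⊆ f '' ↑T := by
        intro Q hQm
        refine ⟨(Q.k, Q.j), ?_, rfl⟩
        rw [Finset.mem_coe, hT, Finset.mem_biUnion]
        refine ⟨Q.k, hk Q hQm, ?_⟩
        rw [Finset.mem_product]
        exact ⟨Finset.mem_singleton_self _, Fintype.mem_piFinset.2 (hj Q hQm)⟩
      have hTfin : (f '' ↑T).Finite := T.finite_toSet.image f
      refine ⟨hTfin.subset hsub, ?_⟩
      have hcard : T.card ≤ 3 * 2 ^ n := by
        calc T.card ≤ ∑ k ∈ Finset.Icc (Q₀.k - 1) (Q₀.k + 1),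
            ({k} ×ˢ Fintype.piFinset (fun i => Finset.Icc (b k i - 1) (b k i))).card :=
              Finset.card_biUnion_le
        _ ≤ ∑ _k ∈ Finset.Icc (Q₀.k - 1) (Q₀.k + 1), 2 ^ n := by
            apply Finset.sum_le_sum
            intro k _
            rw [Finset.card_product, Finset.card_singleton, one_mul, Fintype.card_piFinset]
            apply le_of_eq
            calc ∏ i : Fin n, (Finset.Icc (b k i - 1) (b k i)).card
                = ∏ _i : Fin n, 2 := by
                  apply Finset.prod_congr rfl
                  intro i _
                  rw [Int.card_Icc, show b k i + 1 - (b k i - 1) = (2:ℤ) by ring]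
                  rfl
              _ = 2 ^ n := by simp
        _ = 3 * 2 ^ n := by
            rw [Finset.sum_const, Int.card_Icc,
              show Q₀.k + 1 + 1 - (Q₀.k - 1) = (3:ℤ) by ring,
              show ((3:ℤ)).toNat = 3 from rfl, smul_eq_mul]
      calc S.ncard ≤ (f '' ↑T).ncard := Set.ncard_le_ncard hsub hTfin
        _ = (T.image f).card := by rw [← Finset.coe_image, Set.ncard_coe_finset]
        _ ≤ T.card := Finset.card_image_le
        _ ≤ 3 * 2 ^ n := hcard
  · -- part (b)
    intro Q hQ hmeet
    obtain ⟨z, hz, hzf⟩ := hmeet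
    have hslenU : (unitCube n).sidelength = 1 := by
      show (2:ℝ) ^ (0:ℤ) = 1
      norm_num
    rw [hslenU, mul_one]
    by_contra hlt
    push_neg at hlt
    have hsl : Q.sidelength = 2 ^ Q.k := rfl
    have hk5 : Q.k ≤ -5 := by
      by_contra hk'
      push_neg at hk'
      have h4 : (2:ℝ) ^ (-4:ℤ) ≤ 2 ^ Q.k := zpow_le_zpow_right₀ one_le_two (by omega)
      have h4' : (2:ℝ) ^ (-4:ℤ) = 1/16 := by norm_num
      rw [h4'] at h4
      rw [hsl] at hlt
      linarith
    have hs32 : Q.sidelength ≤ 1/32 := by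
      have h5 : (2:ℝ) ^ Q.k ≤ (2:ℝ) ^ (-5:ℤ) := zpow_le_zpow_right₀ one_le_two hk5
      have h5' : (2:ℝ) ^ (-5:ℤ) = 1/32 := by norm_num
      rw [h5'] at h5
      rw [hsl]
      linarith
    have hcl0 : ∀ i, (0:ℝ) ≤ z i ∧ z i ≤ 1 := by
      have h := DyadicCube.mem_closure_toSet.1 hzf.1
      intro i
      have := h i
      rw [hslenU] at this
      simpa [unitCube] using this
    obtain ⟨i0, hb⟩ : ∃ i, z i = 0 ∨ z i = 1 := by
      have hint : z ∉ interior (unitCube n).toSet := hzf.2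
      rw [DyadicCube.toSet_eq_pi, interior_pi_set Set.finite_univ] at hint
      simp only [Set.mem_pi, Set.mem_univ, forall_true_left, interior_Ioc, Set.mem_Ioo,
        not_forall] at hint
      obtain ⟨i, hi⟩ := hint
      refine ⟨i, ?_⟩
      have hc := hcl0 i
      have hlo : ((unitCube n).j i : ℝ) * 2 ^ (unitCube n).k = 0 := by norm_num [unitCube]
      have hhi : (((unitCube n).j i : ℝ) + 1) * 2 ^ (unitCube n).k = 1 := by norm_num [unitCube]
      rw [hlo, hhi] at hi
      rcases not_and_or.1 hi with h | h
      · exact Or.inl (le_antisymm (not_lt.1 h) hc.1)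
      · exact Or.inr (le_antisymm hc.2 (not_lt.1 h))
    have hdisj : (DyadicCube.parent Q).dilate 3 ⊆ ((unitCube n).dilate (1 / 10))ᶜ := by
      intro w hw
      simp only [Set.mem_compl_iff]
      intro hwmem
      have h1 := hw i0
      have h2 := hwmem i0
      have h3 := DyadicCube.abs_center_parent Q i0
      have h4 : |z i0 - Q.center i0| ≤ Q.sidelength / 2 :=
        DyadicCube.abs_sub_center_of_mem_closure hz i0
      have hcU : (unitCube n).center i0 = 1/2 := by norm_num [unitCube, DyadicCube.center]
      rw [hcU, hslenU] at h2
      rw [DyadicCube.parent_slen] at h1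
      have hzw : |z i0 - w i0| ≤ 4 * Q.sidelength := by
        have t1 := abs_sub_le (z i0) (Q.center i0) (w i0)
        have t2 := abs_sub_le (Q.center i0) ((DyadicCube.parent Q).center i0) (w i0)
        rw [abs_sub_comm (Q.center i0) ((DyadicCube.parent Q).center i0)] at t2
        rw [abs_sub_comm ((DyadicCube.parent Q).center i0) (w i0)] at t2
        linarith
      obtain ⟨e1a, e1b⟩ := abs_le.1 hzw
      obtain ⟨e2a, e2b⟩ := abs_le.1 h2
      rcases hb with hb | hb <;> rw [hb] at e1a e1b <;> linarith
    have hμ0 : μ ((DyadicCube.parent Q).dilate 3) = 0 := measure_mono_null hdisj hμ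
    have hpu := DyadicCube.parent_subset_unit hQ.1 (by omega)
    exact hQ.2.2 _ hpu (DyadicCube.ssubset_parent hn Q) (hμOK _ hpu hμ0)

end
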